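/- (Truncation error, Theorem 1.) Let f : ℝ → ℝ be a measurable probability density (f ≥ 0, ∫_ℝ f = 1) that is bounded by some constant M ≥ 0, let m ≥ 1 be a natural number, and let ε ≥ 0 be such that ∫_ℝ f(x)^{n+1} dx ≤ ε for every n ≥ m. Then |∫_ℝ f(x)·e^{-f(x)} dx − (1 + ∑_{n=1}^{m−1} ((−1)^n / n!) · ∫_ℝ f(x)^{n+1} dx)| ≤ e·ε, where e is Euler's number. -/

import Mathlib

open MeasureTheory Real


lemma exp_neg_taylor_bound (k : ℕ) : ∀ t : ℝ, 0 ≤ t →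
    |Real.exp (-t) - ∑ n ∈ Finset.range k, (-t) ^ n / n.factorial| ≤ t ^ k / k.factorial := by
  induction k with
  | zero =>
    intro t ht
    simp only [Finset.range_zero, Finset.sum_empty, sub_zero, pow_zero, Nat.factorial_zero,
      Nat.cast_one, div_one]
    rw [abs_of_pos (Real.exp_pos _)]
    exact Real.exp_le_one_iff.2 (neg_nonpos.2 ht)
  | succ k ih =>
    intro t ht
    set g : ℝ → ℝ := fun s => Real.exp (-s) - ∑ n ∈ Finset.range (k+1), (-s) ^ n / n.factorial
      with hg
    have hderiv : ∀ s : ℝ, HasDerivAt g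
        (-(Real.exp (-s) - ∑ n ∈ Finset.range k, (-s) ^ n / n.factorial)) s := by
      intro s
      have h1 : HasDerivAt (fun s : ℝ => Real.exp (-s)) (Real.exp (-s) * (-1)) s :=
        (Real.hasDerivAt_exp (-s)).comp s ((hasDerivAt_id s).neg)
      have h2 : ∀ n : ℕ, HasDerivAt (fun s : ℝ => (-s) ^ n / n.factorial)
          (((n : ℝ) * (-s) ^ (n - 1) * (-1)) / n.factorial) s := by
        intro n
        exact (((hasDerivAt_pow n (-s)).comp s ((hasDerivAt_id s).neg))).div_const _
      have h3 : HasDerivAt (fun s : ℝ => ∑ n ∈ Finset.range (k+1), (-s) ^ n / n.factorial)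
          (∑ n ∈ Finset.range (k+1), ((n : ℝ) * (-s) ^ (n - 1) * (-1)) / n.factorial) s :=
        HasDerivAt.fun_sum fun n _ => h2 n
      have hsum : (∑ n ∈ Finset.range (k+1), ((n : ℝ) * (-s) ^ (n - 1) * (-1)) / n.factorial)
          = -∑ n ∈ Finset.range k, (-s) ^ n / n.factorial := by
        rw [Finset.sum_range_succ']
        simp only [Nat.cast_zero, zero_mul, pow_zero, Nat.factorial_zero, Nat.cast_one,
          zero_mul, zero_div, add_zero]
        rw [← Finset.sum_neg_distrib]
        refine Finset.sum_congr rfl fun n _ => ?_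
        have hfac : ((n+1).factorial : ℝ) = (n+1) * n.factorial := by
          rw [Nat.factorial_succ]; push_cast; ring
        rw [hfac]
        have h0 : ((n : ℝ) + 1) ≠ 0 := by positivity
        have h0' : (n.factorial : ℝ) ≠ 0 := by positivity
        field_simp
        rw [Nat.add_sub_cancel]; push_cast; ring
      have := h1.fun_sub h3
      rw [hsum] at this
      exact this.congr_deriv (by ring)
    have hconteq : Continuous fun s : ℝ =>
        -(Real.exp (-s) - ∑ n ∈ Finset.range k, (-s) ^ n / n.factorial) := by
      fun_prop
    have hftc : ∫ s in (0:ℝ)..t,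
        -(Real.exp (-s) - ∑ n ∈ Finset.range k, (-s) ^ n / n.factorial) = g t - g 0 :=
      intervalIntegral.integral_eq_sub_of_hasDerivAt (fun s _ => hderiv s)
        (hconteq.intervalIntegrable 0 t)
    have hg0 : g 0 = 0 := by
      simp only [hg, neg_zero, Real.exp_zero]
      rw [Finset.sum_range_succ']
      simp [zero_pow]
    have habs : |g t| ≤ ∫ s in (0:ℝ)..t, s ^ k / k.factorial := by
      have hgt : g t = g t - g 0 := by rw [hg0, sub_zero]
      rw [hgt, ← hftc, ← Real.norm_eq_abs]
      refine (intervalIntegral.norm_integral_le_integral_norm ht).trans ?_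
      refine intervalIntegral.integral_mono_on ht ?_ ?_ ?_
      · exact (hconteq.norm).intervalIntegrable 0 t
      · exact (by fun_prop : Continuous fun s : ℝ => s ^ k / (k.factorial : ℝ)).intervalIntegrable 0 t
      · intro s hs
        rw [Real.norm_eq_abs, abs_neg]
        exact ih s hs.1
    refine habs.trans ?_
    rw [intervalIntegral.integral_div, integral_pow]
    rw [Nat.factorial_succ]
    push_cast
    rw [zero_pow (by omega), sub_zero]
    rw [div_div]

theorem dmim_truncation_error (f : ℝ → ℝ) (hf : Measurable f) (hf0 : ∀ x, 0 ≤ f x)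
    (hf1 : (∫ x, f x) = 1) (M : ℝ) (hM : 0 ≤ M) (hfM : ∀ x, f x ≤ M)
    (m : ℕ) (hm : 1 ≤ m) (ε : ℝ) (hε : 0 ≤ ε)
    (hpow : ∀ n : ℕ, m ≤ n → (∫ x, (f x) ^ (n + 1)) ≤ ε) :
    |(∫ x, f x * Real.exp (-(f x))) -
        (1 + ∑ n ∈ Finset.Icc 1 (m - 1),
          ((-1 : ℝ) ^ n / n.factorial) * ∫ x, (f x) ^ (n + 1))| ≤ Real.exp 1 * ε := by
  -- integrability facts
  have hfi : Integrable f := by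
    by_contra h
    rw [integral_undef h] at hf1
    norm_num at hf1
  have hfin : ∀ n : ℕ, Integrable (fun x => f x ^ (n + 1)) := by
    intro n
    refine (hfi.const_mul (M ^ n)).mono ((hf.pow_const _).aestronglyMeasurable) ?_
    refine Filter.Eventually.of_forall fun x => ?_
    rw [Real.norm_eq_abs, Real.norm_eq_abs, abs_of_nonneg (pow_nonneg (hf0 x) _),
      abs_of_nonneg (mul_nonneg (pow_nonneg hM n) (hf0 x))]
    calc f x ^ (n + 1) = f x ^ n * f x := by ring
      _ ≤ M ^ n * f x := by
          exact mul_le_mul_of_nonneg_right (pow_le_pow_left₀ (hf0 x) (hfM x) n) (hf0 x)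
  have hgi : Integrable (fun x => f x * Real.exp (-(f x))) := by
    refine hfi.mono ((hf.mul (Real.measurable_exp.comp hf.neg)).aestronglyMeasurable) ?_
    refine Filter.Eventually.of_forall fun x => ?_
    rw [Real.norm_eq_abs, Real.norm_eq_abs, abs_of_nonneg (mul_nonneg (hf0 x) (Real.exp_pos _).le),
      abs_of_nonneg (hf0 x)]
    calc f x * Real.exp (-(f x)) ≤ f x * 1 :=
          mul_le_mul_of_nonneg_left (Real.exp_le_one_iff.2 (neg_nonpos.2 (hf0 x))) (hf0 x)
      _ = f x := mul_one _
  -- rewrite truncated sum as a range sum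
  obtain ⟨k, rfl⟩ : ∃ k, m = k + 1 := ⟨m - 1, by omega⟩
  have hsum1 : (1 : ℝ) + ∑ n ∈ Finset.Icc 1 (k + 1 - 1),
      ((-1 : ℝ) ^ n / n.factorial) * ∫ x, (f x) ^ (n + 1)
      = ∑ n ∈ Finset.range (k + 1), ((-1 : ℝ) ^ n / n.factorial) * ∫ x, (f x) ^ (n + 1) := by
    rw [Finset.sum_range_succ']
    simp only [Nat.add_sub_cancel, pow_zero, Nat.factorial_zero, Nat.cast_one, div_one,
      one_mul, zero_add, pow_one, hf1, mul_one]
    rw [← Finset.Ico_add_one_right_eq_Icc, Finset.sum_Ico_eq_sum_range]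
    simp [add_comm]
  rw [hsum1]
  -- move sum inside integral
  have hswap : ∑ n ∈ Finset.range (k + 1), ((-1 : ℝ) ^ n / n.factorial) * ∫ x, (f x) ^ (n + 1)
      = ∫ x, ∑ n ∈ Finset.range (k + 1), ((-1 : ℝ) ^ n / n.factorial) * (f x) ^ (n + 1) := by
    rw [integral_finset_sum]
    · exact Finset.sum_congr rfl fun n _ => (integral_const_mul _ _).symm
    · exact fun n _ => (hfin n).const_mul _
  rw [hswap, ← integral_sub hgi]
  swap
  · exact integrable_finset_sum _ fun n _ => (hfin n).const_mul _
  -- key pointwise estimate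
  have hkey : ∀ x, ‖f x * Real.exp (-(f x)) -
      ∑ n ∈ Finset.range (k + 1), ((-1 : ℝ) ^ n / n.factorial) * (f x) ^ (n + 1)‖
      ≤ f x ^ (k + 2) / (k + 1).factorial := by
    intro x
    have heq : f x * Real.exp (-(f x)) -
        ∑ n ∈ Finset.range (k + 1), ((-1 : ℝ) ^ n / n.factorial) * (f x) ^ (n + 1)
        = f x * (Real.exp (-(f x)) -
          ∑ n ∈ Finset.range (k + 1), (-(f x)) ^ n / n.factorial) := by
      rw [mul_sub, Finset.mul_sum]
      congr 1
      refine Finset.sum_congr rfl fun n _ => ?_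
      rw [neg_pow]
      ring
    rw [heq, Real.norm_eq_abs, abs_mul, abs_of_nonneg (hf0 x)]
    calc f x * |Real.exp (-(f x)) - ∑ n ∈ Finset.range (k + 1), (-(f x)) ^ n / n.factorial|
        ≤ f x * (f x ^ (k + 1) / (k + 1).factorial) :=
          mul_le_mul_of_nonneg_left (exp_neg_taylor_bound (k + 1) (f x) (hf0 x)) (hf0 x)
      _ = f x ^ (k + 2) / (k + 1).factorial := by ring
  -- conclude
  have hb : ‖∫ x, (f x * Real.exp (-(f x)) -
      ∑ n ∈ Finset.range (k + 1), ((-1 : ℝ) ^ n / n.factorial) * (f x) ^ (n + 1))‖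
      ≤ ∫ x, f x ^ (k + 2) / (k + 1).factorial :=
    norm_integral_le_of_norm_le ((hfin (k + 1)).div_const _)
      (Filter.Eventually.of_forall hkey)
  rw [← Real.norm_eq_abs]
  refine hb.trans ?_
  rw [integral_div]
  have h1 : (∫ x, f x ^ (k + 2)) ≤ ε := hpow (k + 1) le_rfl
  have h2 : (1 : ℝ) ≤ (k + 1).factorial := by exact_mod_cast Nat.one_le_iff_ne_zero.2 (k+1).factorial_ne_zero
  calc (∫ x, f x ^ (k + 2)) / (k + 1).factorial ≤ ε / 1 := div_le_div₀ hε h1 one_pos h2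
    _ = ε := div_one ε
    _ ≤ Real.exp 1 * ε := le_mul_of_one_le_left hε (Real.one_le_exp (by norm_num))
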